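/- Let G be a countable, infinite discrete group which is either icc (every non-identity conjugacy class is infinite) or torsion-free, and let A be a finite set with at least two elements. Then every non-constant strongly irreducible subshift Z ⊆ A^G is essentially free. -/

import Mathlib

open Pointwise

section Defs

variable (G : Type*) [Group G]

/-- The right-shift of `G` on `G → A`: `(g • z) h = z (h * g)`. -/
instance (priority := high) shiftSMul (A : Type*) : SMul G (G → A) :=
  ⟨fun g z h => z (h * g)⟩

/-- The right-shift action of `G` on `G → A` is a `G`-action (the Bernoulli flow when
`A = Bool`). -/
instance shiftMulAction (A : Type*) : MulAction G (G → A) where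
  one_smul z := funext fun h => by show z (h * 1) = z h; rw [mul_one]
  mul_smul g₁ g₂ z := funext fun h => by
    show z (h * (g₁ * g₂)) = z (h * g₁ * g₂)
    rw [mul_assoc]

/-- `S ⊆ G` is `D`-separated if `Dg ∩ Dh = ∅` for all distinct `g, h ∈ S`. -/
def DSeparated (D S : Set G) : Prop :=
  ∀ g ∈ S, ∀ h ∈ S, g ≠ h → Disjoint (D * ({g} : Set G)) (D * ({h} : Set G))

/-- The separated covering property for a `G`-flow `X`: for every finite `D ⊆ G`
and every nonempty open `U ⊆ X` there is a `D`-separated `S ⊆ G` with `S⁻¹U = X`. -/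
def SCP (X : Type*) [TopologicalSpace X] [MulAction G X] : Prop :=
  ∀ D : Set G, D.Finite → ∀ U : Set X, IsOpen U → U.Nonempty →
    ∃ S : Set G, DSeparated G D S ∧ ∀ x : X, ∃ s ∈ S, s • x ∈ U

/-- A `G`-flow is minimal if every orbit is dense. -/
def IsMinimalFlow (X : Type*) [TopologicalSpace X] [MulAction G X] : Prop :=
  ∀ x : X, Dense (MulAction.orbit G x)

/-- Two `G`-flows `X` and `Y` are disjoint if the only closed `G`-invariant subset of
`X × Y` projecting onto both factors is `X × Y` itself. -/
def FlowsDisjoint (X Y : Type*) [TopologicalSpace X] [TopologicalSpace Y]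
    [MulAction G X] [MulAction G Y] : Prop :=
  ∀ J : Set (X × Y), IsClosed J → (∀ (g : G), ∀ p ∈ J, g • p ∈ J) →
    Prod.fst '' J = Set.univ → Prod.snd '' J = Set.univ → J = Set.univ

end Defs

/-- A subshift `Z ⊆ A^G` is strongly irreducible if there is a finite `D ⊆ G` such that
for all finite `E₁, E₂ ⊆ G` which are `D`-apart (`DE₁ ∩ DE₂ = ∅`) and all `z₁, z₂ ∈ Z`
there is `x ∈ Z` agreeing with `z₁` on `E₁` and with `z₂` on `E₂`. -/
def StronglyIrreducible (G : Type*) [Group G] {A : Type*} (Z : Set (G → A)) : Prop :=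
  ∃ D : Set G, D.Finite ∧
    ∀ E₁ E₂ : Set G, E₁.Finite → E₂.Finite → Disjoint (D * E₁) (D * E₂) →
      ∀ z₁ ∈ Z, ∀ z₂ ∈ Z, ∃ x ∈ Z,
        (∀ g ∈ E₁, x g = z₁ g) ∧ (∀ g ∈ E₂, x g = z₂ g)

/-- Let `G` be a countable, infinite discrete group which is icc or
torsion-free, and `A` a finite alphabet with at least two elements.  Then every
non-constant strongly irreducible subshift `Z ⊆ A^G` is essentially free (for every
`g ≠ 1`, the `g`-fixed points have empty interior relative to `Z`). -/
theorem strongly_irreducible_essentially_free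
    (G : Type*) [Group G] [Countable G] [Infinite G]
    (hG : (∀ g : G, g ≠ 1 → {h : G | IsConj g h}.Infinite) ∨ (∀ g : G, g ≠ 1 → ¬IsOfFinOrder g))
    (A : Type*) [TopologicalSpace A] [DiscreteTopology A] [Finite A] [Nontrivial A]
    (Z : Set (G → A)) (hZcl : IsClosed Z) (hZinv : ∀ (g : G), ∀ z ∈ Z, g • z ∈ Z)
    (hZsi : StronglyIrreducible G Z)
    (hZnc : ¬ ∀ z ∈ Z, ∀ g h : G, z g = z h) :
    ∀ g : G, g ≠ 1 → ∀ U : Set (G → A), IsOpen U → (Z ∩ U).Nonempty →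
      ∃ z ∈ Z ∩ U, g • z ≠ z := by
  intro g hg U hU hZU
  obtain ⟨z₀, hz₀Z, hz₀U⟩ := hZU
  obtain ⟨D, hDfin, hSI⟩ := hZsi
  -- nonconstant witnesses: two points of Z with different value at 1
  push_neg at hZnc
  obtain ⟨z₁, hz₁Z, a, b, hab⟩ := hZnc
  have hy₁Z : a • z₁ ∈ Z := hZinv a z₁ hz₁Z
  have hy₂Z : b • z₁ ∈ Z := hZinv b z₁ hz₁Z
  have hy₁ : (a • z₁) 1 = z₁ a := by show z₁ (1 * a) = z₁ a; rw [one_mul]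
  have hy₂ : (b • z₁) 1 = z₁ b := by show z₁ (1 * b) = z₁ b; rw [one_mul]
  have hyne : (a • z₁) 1 ≠ (b • z₁) 1 := by rw [hy₁, hy₂]; exact hab
  -- find a finite set F determining membership in U near z₀
  obtain ⟨F, u, hFu, hFU⟩ := (isOpen_pi_iff.1 hU) z₀ hz₀U
  have hF : ∀ x : G → A, (∀ f ∈ F, x f = z₀ f) → x ∈ U := by
    intro x hx
    apply hFU
    intro i hi
    rw [hx i hi]
    exact (hFu i hi).2
  -- the finite bad sets
  have hBfin : (D⁻¹ * D * (F : Set G)).Finite := (hDfin.inv.mul hDfin).mul F.finite_toSet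
  have hCfin : (D⁻¹ * D).Finite := hDfin.inv.mul hDfin
  -- choose k and n
  obtain ⟨k, n, hgn1, hkB, hkC⟩ :
      ∃ (k : G) (n : ℕ), g ^ n ≠ 1 ∧ k * g ^ n ∉ D⁻¹ * D * (F : Set G) ∧
        k * g ^ n * k⁻¹ ∉ D⁻¹ * D := by
    rcases hG with hicc | htf
    · -- icc case: n = 1
      have hS : ({h : G | IsConj g h} \ (D⁻¹ * D)).Infinite := (hicc g hg).diff hCfin
      have hT : {k : G | k * g * k⁻¹ ∈ {h : G | IsConj g h} \ (D⁻¹ * D)}.Infinite := by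
        intro hTfin
        apply hS
        have hsub : {h : G | IsConj g h} \ (D⁻¹ * D) ⊆
            (fun k => k * g * k⁻¹) ''
              {k : G | k * g * k⁻¹ ∈ {h : G | IsConj g h} \ (D⁻¹ * D)} := by
          rintro c ⟨hc1, hc2⟩
          obtain ⟨u, hu⟩ := isConj_iff.1 hc1
          exact ⟨u, by simp only [Set.mem_setOf_eq, hu]; exact ⟨hc1, hc2⟩, hu⟩
        exact Set.Finite.subset (hTfin.image _) hsub
      obtain ⟨k, hk⟩ := (hT.diff (hBfin.image (· * g⁻¹))).nonempty
      refine ⟨k, 1, by simpa using hg, ?_, ?_⟩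
      · intro hmem
        exact hk.2 ⟨k * g ^ 1, by simpa using hmem, by group⟩
      · have := hk.1
        simp only [Set.mem_setOf_eq, pow_one] at this ⊢
        exact this.2
    · -- torsion-free case: k = 1
      have hinj : Function.Injective (fun n : ℕ => g ^ n) :=
        injective_pow_iff_not_isOfFinOrder.2 (htf g hg)
      have hfin : {n : ℕ | g ^ n ∈ D⁻¹ * D * (F : Set G) ∪ D⁻¹ * D ∪ {1}}.Finite := by
        apply Set.Finite.preimage hinj.injOn
        exact (hBfin.union hCfin).union (Set.finite_singleton 1)
      obtain ⟨n, hn⟩ := hfin.infinite_compl.nonempty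
      simp only [Set.mem_compl_iff, Set.mem_setOf_eq, Set.mem_union, Set.mem_singleton_iff,
        not_or] at hn
      exact ⟨1, n, hn.2, by simpa using hn.1.1, by simpa using hn.1.2⟩
  -- pick y ∈ Z with y 1 ≠ z₀ k
  obtain ⟨y, hyZ, hy1⟩ : ∃ y ∈ Z, y 1 ≠ z₀ k := by
    by_cases h : (a • z₁) 1 = z₀ k
    · exact ⟨b • z₁, hy₂Z, fun hc => hyne (h.trans hc.symm)⟩
    · exact ⟨a • z₁, hy₁Z, h⟩
  have hz₂Z : (k * g ^ n)⁻¹ • y ∈ Z := hZinv (k * g ^ n)⁻¹ y hyZ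
  have hz₂m : ((k * g ^ n)⁻¹ • y) (k * g ^ n) = y 1 := by
    show y ((k * g ^ n) * (k * g ^ n)⁻¹) = y 1
    rw [mul_inv_cancel]
  -- the two sets for strong irreducibility
  have hdisj : Disjoint (D * ((F : Set G) ∪ {k})) (D * ({k * g ^ n} : Set G)) := by
    rw [Set.disjoint_left]
    rintro p hp₁ hp₂
    obtain ⟨d', hd', m', hm', hpm⟩ := hp₂
    rw [Set.mem_singleton_iff] at hm'
    obtain ⟨d, hd, e, he, hpe⟩ := hp₁
    have key : d' * (k * g ^ n) = d * e := by
      rw [hm'] at hpm; exact hpm.trans hpe.symm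
    rcases he with heF | hek
    · apply hkB
      have h1 : k * g ^ n = d'⁻¹ * d * e := by
        calc k * g ^ n = d'⁻¹ * (d' * (k * g ^ n)) := by group
          _ = d'⁻¹ * (d * e) := by rw [key]
          _ = d'⁻¹ * d * e := by group
      rw [h1]
      exact Set.mul_mem_mul (Set.mul_mem_mul (Set.inv_mem_inv.2 hd') hd) heF
    · rw [Set.mem_singleton_iff] at hek
      rw [hek] at key
      apply hkC
      have h1 : k * g ^ n * k⁻¹ = d'⁻¹ * d := by
        calc k * g ^ n * k⁻¹ = d'⁻¹ * (d' * (k * g ^ n)) * k⁻¹ := by group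
          _ = d'⁻¹ * (d * k) * k⁻¹ := by rw [key]
          _ = d'⁻¹ * d := by group
      rw [h1]
      exact Set.mul_mem_mul (Set.inv_mem_inv.2 hd') hd
  obtain ⟨x, hxZ, hx₁, hx₂⟩ :=
    hSI ((F : Set G) ∪ {k}) {k * g ^ n} (F.finite_toSet.union (Set.finite_singleton k))
      (Set.finite_singleton (k * g ^ n)) hdisj z₀ hz₀Z ((k * g ^ n)⁻¹ • y) hz₂Z
  refine ⟨x, ⟨hxZ, hF x fun f hf => hx₁ f (Or.inl hf)⟩, ?_⟩
  intro hgx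
  have hshift : ∀ j : G, x (j * g) = x j := fun j => congrFun hgx j
  have hpow : ∀ i : ℕ, x (k * g ^ i) = x k := by
    intro i
    induction i with
    | zero => rw [pow_zero, mul_one]
    | succ i ih => rw [pow_succ, ← mul_assoc, hshift, ih]
  have hxk : x k = z₀ k := hx₁ k (Or.inr rfl)
  have hxm : x (k * g ^ n) = y 1 := (hx₂ (k * g ^ n) rfl).trans hz₂m
  exact hy1 (by rw [← hxm, hpow n, hxk])
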